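/- arXiv:2312.11273 — 4 statements merged into one kernel-verified Lean document; each statement's English description precedes it below -/
import Mathlib

section
/- If X is a random variable taking values in the non-negative integers with mean μ and variance σ², then σ² ≥ (μ - ⌊μ⌋)(1 - μ + ⌊μ⌋). -/
open MeasureTheory

lemma int_quad_nonneg (n a : ℤ) : ((n:ℝ) - a) * ((n:ℝ) - a - 1) ≥ 0 := by
  rcases le_or_gt n a with h | h
  · have h1 : (n:ℝ) - a ≤ 0 := by exact_mod_cast sub_nonpos.mpr (Int.cast_le.mpr h)
    nlinarith
  · have h1 : (1:ℝ) ≤ (n:ℝ) - a := by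
      have h2 : a + 1 ≤ n := h
      have h3 : ((a:ℝ) + 1) ≤ (n:ℝ) := by exact_mod_cast h2
      linarith
    nlinarith

theorem nonneg_integer_rv_variance_lower_bound
    {Ω : Type*} [MeasurableSpace Ω] (ℙ : Measure Ω) [IsProbabilityMeasure ℙ]
    (X : Ω → ℕ) (hX1 : Integrable (fun ω => (X ω : ℝ)) ℙ)
    (hX2 : Integrable (fun ω => ((X ω : ℝ)) ^ 2) ℙ)
    (μ : ℝ) (hμ : μ = ∫ ω, (X ω : ℝ) ∂ℙ)
    (σ2 : ℝ) (hσ : σ2 = ∫ ω, ((X ω : ℝ) - μ) ^ 2 ∂ℙ) :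
    σ2 ≥ (μ - ⌊μ⌋) * (1 - μ + ⌊μ⌋) := by
  set a : ℝ := (⌊μ⌋ : ℝ) with ha
  set f : ℝ := μ - a with hf
  -- integrability of (X - μ)^2
  have hqi : Integrable (fun ω => ((X ω : ℝ) - μ) ^ 2) ℙ := by
    have : (fun ω => ((X ω : ℝ) - μ) ^ 2)
        = fun ω => (X ω : ℝ) ^ 2 - (2 * μ) * (X ω : ℝ) + μ ^ 2 := by
      funext ω; ring
    rw [this]
    exact ((hX2.sub (hX1.const_mul (2 * μ))).add (integrable_const _))
  have hli : Integrable (fun ω => f * (1 - f) + (1 - 2 * f) * ((X ω : ℝ) - μ)) ℙ := by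
    exact (integrable_const _).add (((hX1.sub (integrable_const μ)).const_mul _))
  -- pointwise bound
  have hpt : ∀ ω, f * (1 - f) + (1 - 2 * f) * ((X ω : ℝ) - μ) ≤ ((X ω : ℝ) - μ) ^ 2 := by
    intro ω
    have h := int_quad_nonneg (X ω : ℤ) ⌊μ⌋
    push_cast at h
    simp only [hf, ha]
    nlinarith [h]
  have hmono : ∫ ω, (f * (1 - f) + (1 - 2 * f) * ((X ω : ℝ) - μ)) ∂ℙ
      ≤ ∫ ω, ((X ω : ℝ) - μ) ^ 2 ∂ℙ := integral_mono hli hqi hpt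
  have hcent : ∫ ω, ((X ω : ℝ) - μ) ∂ℙ = 0 := by
    rw [integral_sub hX1 (integrable_const μ), integral_const]
    simp [hμ]
  have hlhs : ∫ ω, (f * (1 - f) + (1 - 2 * f) * ((X ω : ℝ) - μ)) ∂ℙ = f * (1 - f) := by
    have h2 : Integrable (fun ω => (1 - 2 * f) * ((X ω : ℝ) - μ)) ℙ := by
      simpa using ((hX1.sub (integrable_const μ)).const_mul (1 - 2 * f))
    rw [integral_add (integrable_const _) h2, integral_const, MeasureTheory.integral_const_mul, hcent]
    simp
  rw [hσ]
  have : f * (1 - f) = (μ - ⌊μ⌋) * (1 - μ + ⌊μ⌋) := by rw [hf, ha]; ring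
  have hff : f * (1 - f) = f * (1 - μ + a) := by rw [hf]; ring
  linarith [hmono, hlhs, hff, this]
end

section
/- Let μ ≥ 0 and σ² ≥ 0 satisfy the feasibility condition σ² ≥ (μ - ⌊μ⌋)(1 - μ + ⌊μ⌋). Let α ∈ [0,1], let d be any non-negative integer, and define μ' = α·d + (1-α)·μ and σ'² = α·(d - μ)² + (1-α)·σ². Then σ'² ≥ (μ' - ⌊μ'⌋)(1 - μ' + ⌊μ'⌋). -/
theorem ses_update_preserves_feasibility
    (μ σ2 α : ℝ) (hμ : 0 ≤ μ) (hσ0 : 0 ≤ σ2)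
    (hfeas : σ2 ≥ (μ - ⌊μ⌋) * (1 - μ + ⌊μ⌋))
    (hα0 : 0 ≤ α) (hα1 : α ≤ 1) (d : ℕ)
    (μ' σ2' : ℝ)
    (hμ' : μ' = α * d + (1 - α) * μ)
    (hσ' : σ2' = α * ((d : ℝ) - μ) ^ 2 + (1 - α) * σ2) :
    σ2' ≥ (μ' - ⌊μ'⌋) * (1 - μ' + ⌊μ'⌋) := by
  set n : ℤ := ⌊μ'⌋ with hn
  -- Step 1: σ2 ≥ (μ - n) * (1 - μ + n)
  have hσn : σ2 ≥ (μ - (n : ℝ)) * (1 - μ + (n : ℝ)) := by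
    rcases le_or_gt ((μ - (n : ℝ)) * (1 - μ + (n : ℝ))) 0 with h | h
    · linarith
    · -- both factors must be positive, hence n = ⌊μ⌋
      have h1 : 0 < μ - (n : ℝ) ∧ 0 < 1 - μ + (n : ℝ) := by
        rcases mul_pos_iff.mp h with ⟨ha, hb⟩ | ⟨ha, hb⟩
        · exact ⟨ha, hb⟩
        · exfalso; linarith
      have hfl : ⌊μ⌋ = n := by
        apply Int.floor_eq_iff.mpr
        constructor
        · linarith [h1.1]
        · push_cast; linarith [h1.2]
      rw [hfl] at hfeas
      linarith
  -- Step 2: (2d - 2n - 1)^2 ≥ 1 since it is an odd integer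
  have hodd : ((2 * (d : ℝ) - 2 * (n : ℝ) - 1)) ^ 2 ≥ 1 := by
    have hk : (2 * (d : ℤ) - 2 * n - 1) ≠ 0 := by omega
    have h1 : (1 : ℤ) ≤ (2 * (d : ℤ) - 2 * n - 1) ^ 2 := by
      rcases hk.lt_or_gt with h | h <;> nlinarith
    have h2 : (1 : ℝ) ≤ ((2 * (d : ℤ) - 2 * n - 1 : ℤ) : ℝ) ^ 2 := by
      exact_mod_cast h1
    push_cast at h2
    linarith
  -- Step 3: algebraic combination
  have hA : (0 : ℝ) ≤ α * ((2 * (d : ℝ) - 2 * (n : ℝ) - 1) ^ 2 - 1) :=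
    mul_nonneg hα0 (by linarith)
  have hB : (0 : ℝ) ≤ (1 - α) * (σ2 - (μ - (n : ℝ)) * (1 - μ + (n : ℝ))) :=
    mul_nonneg (by linarith) (by linarith)
  have hC : (0 : ℝ) ≤ (α * ((d : ℝ) - μ)) ^ 2 := sq_nonneg _
  subst hμ' hσ'
  nlinarith [hA, hB, hC]
end

section
/- Let (D_t), (f_t), (MSE_t) satisfy: f_{t+1} = α D_t + (1-α) f_t, MSE_{t+1} = β (D_t - f_t)² + (1-β) MSE_t, with f_1, MSE_1 constants, and suppose E[D_{t+1} | D_1,…,D_t] = f_{t+1} and E[(D_{t+1} - f_{t+1})² | D_1,…,D_t] = MSE_{t+1} almost surely for all t (with this also holding for t = 0 with the unconditioned expectation). Then E[MSE_t] = MSE_1 for all t ≥ 1. -/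
open MeasureTheory

theorem ses_consistent_dgp_mse_unbiased
    {Ω : Type*} {m0 : MeasurableSpace Ω} (ℙ : Measure Ω) [IsProbabilityMeasure ℙ]
    (D f MSE : ℕ → Ω → ℝ) (α β c m1 : ℝ)
    (hα0 : 0 ≤ α) (hα1 : α ≤ 1) (hβ0 : 0 ≤ β) (hβ1 : β ≤ 1)
    (hmeas : ∀ t, Measurable (D t))
    (hDint : ∀ t, Integrable (D t) ℙ)
    (hfint : ∀ t, Integrable (f t) ℙ)
    (hMSEint : ∀ t, Integrable (MSE t) ℙ)
    (hsqint : ∀ t, Integrable (fun ω => (D t ω - f t ω) ^ 2) ℙ)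
    (hf1 : f 1 = fun _ => c)
    (hMSE1 : MSE 1 = fun _ => m1)
    (hfrec : ∀ t ≥ 1, f (t + 1) = fun ω => α * D t ω + (1 - α) * f t ω)
    (hMSErec : ∀ t ≥ 1, MSE (t + 1) = fun ω => β * (D t ω - f t ω) ^ 2 + (1 - β) * MSE t ω)
    (hbase_mean : (∫ ω, D 1 ω ∂ℙ) = c)
    (hbase_var : (∫ ω, (D 1 ω - f 1 ω) ^ 2 ∂ℙ) = m1)
    (hcond_mean : ∀ t ≥ 1,
      ℙ[D (t + 1) | ⨆ i ∈ Finset.Icc 1 t, MeasurableSpace.comap (D i) Real.measurableSpace]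
        =ᵐ[ℙ] f (t + 1))
    (hcond_var : ∀ t ≥ 1,
      ℙ[(fun ω => (D (t + 1) ω - f (t + 1) ω) ^ 2) |
          ⨆ i ∈ Finset.Icc 1 t, MeasurableSpace.comap (D i) Real.measurableSpace]
        =ᵐ[ℙ] MSE (t + 1)) :
    ∀ t ≥ 1, (∫ ω, MSE t ω ∂ℙ) = m1 := by
  have key : ∀ t ≥ 1, (∫ ω, (D t ω - f t ω) ^ 2 ∂ℙ) = ∫ ω, MSE t ω ∂ℙ := by
    intro t ht
    rcases Nat.exists_eq_add_of_le ht with ⟨s, rfl⟩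
    rw [Nat.add_comm] 
    rcases Nat.eq_zero_or_pos s with rfl | hs
    · simpa [hMSE1, integral_const] using hbase_var
    · have hle : (⨆ i ∈ Finset.Icc 1 s, MeasurableSpace.comap (D i) Real.measurableSpace) ≤ m0 :=
        iSup₂_le fun i _ => (hmeas i).comap_le
      haveI : SigmaFinite (ℙ.trim hle) := by infer_instance
      have h1 := hcond_var s hs
      have h2 : (∫ ω, (ℙ[(fun ω => (D (s + 1) ω - f (s + 1) ω) ^ 2) |
          ⨆ i ∈ Finset.Icc 1 s, MeasurableSpace.comap (D i) Real.measurableSpace]) ω ∂ℙ)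
          = ∫ ω, (D (s + 1) ω - f (s + 1) ω) ^ 2 ∂ℙ := integral_condExp hle
      have h3 := integral_congr_ae h1
      rw [← h3, h2]
  intro t ht
  induction t, ht using Nat.le_induction with
  | base => simp [hMSE1]
  | succ t ht ih =>
    rw [hMSErec t ht]
    have hint1 : Integrable (fun ω => β * (D t ω - f t ω) ^ 2) ℙ := (hsqint t).const_mul β
    have hint2 : Integrable (fun ω => (1 - β) * MSE t ω) ℙ := (hMSEint t).const_mul (1 - β)
    rw [integral_add hint1 hint2, integral_const_mul, integral_const_mul, key t ht, ih]
    ring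
end

section
/- Let μ ≥ 0, σ² ≥ (μ - ⌊μ⌋)(1 - μ + ⌊μ⌋), α ∈ [0,1], d ∈ ℕ. Write δ = μ - ⌊μ⌋ and define μ' = α d + (1-α)μ, σ'² = α(d-μ)² + (1-α)σ². Then σ'² ≥ (1-α)δ(1-δ) + α(d - μ)², and moreover α(d-μ)² + (1-α)δ(1-δ) ≥ (μ' - ⌊μ'⌋)(1 - μ' + ⌊μ'⌋). -/
lemma ses_aux1 (x : ℝ) (n : ℤ) : Int.fract x * (1 - Int.fract x) ≤ |x - n| := by
  have h0 := Int.fract_nonneg x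
  have h1 := (Int.fract_lt_one x).le
  have hx : Int.fract x = x - ⌊x⌋ := rfl
  rcases le_or_gt n ⌊x⌋ with h | h
  · have hn : (n : ℝ) ≤ ⌊x⌋ := by exact_mod_cast h
    have h2 : Int.fract x ≤ |x - n| := le_trans (by linarith) (le_abs_self _)
    nlinarith
  · have hn : (⌊x⌋ : ℝ) + 1 ≤ n := by exact_mod_cast h
    have h2 : 1 - Int.fract x ≤ |x - n| := le_trans (by linarith) (neg_le_abs _)
    nlinarith

lemma ses_key (μ α : ℝ) (d : ℤ) (hα0 : 0 ≤ α) (hα1 : α ≤ 1) :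
    Int.fract (α * d + (1 - α) * μ) * (1 - Int.fract (α * d + (1 - α) * μ)) ≤
      α * ((d : ℝ) - μ) ^ 2 + (1 - α) * (Int.fract μ * (1 - Int.fract μ)) := by
  set t : ℝ := α * d + (1 - α) * μ with ht
  have hδ0 := Int.fract_nonneg μ
  have hδ1 := Int.fract_lt_one μ
  have hδdef : Int.fract μ = μ - ⌊μ⌋ := rfl
  set δ := Int.fract μ
  set m : ℤ := ⌊μ⌋ with hm
  rcases le_or_gt d m with hd | hd
  · -- d ≤ m, D = μ - d ≥ δ
    have hdm : (d : ℝ) ≤ m := by exact_mod_cast hd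
    set D : ℝ := μ - d with hD
    have hDδ : δ ≤ D := by simp only [hδdef, hD]; linarith
    have hD0 : 0 ≤ D := le_trans hδ0 hDδ
    have hts : t = μ - α * D := by rw [ht, hD]; ring
    rcases le_or_gt (α * D) δ with hs | hs
    · -- floor t = m, fract t = δ - αD
      have hfloor : ⌊t⌋ = m := by
        rw [Int.floor_eq_iff]
        constructor
        · rw [hts]; simp only [hδdef] at hs; linarith
        · rw [hts]; have : μ < m + 1 := by simp only [hδdef] at hδ1; push_cast; linarith
          nlinarith [mul_nonneg hα0 hD0]
      have hft : Int.fract t = δ - α * D := by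
        rw [Int.fract, hfloor, hts, hδdef]; ring
      rw [hft]
      have hsq : (0:ℝ) ≤ α * ((D - δ) * (D + 1 - δ)) :=
        mul_nonneg hα0 (mul_nonneg (by linarith) (by linarith))
      nlinarith [sq_nonneg (α * D), sq_nonneg D]
    · -- αD > δ : then d ≤ m - 1, D ≥ 1
      have hdm1 : d ≤ m - 1 := by
        by_contra hcon
        push_neg at hcon
        have : d = m := le_antisymm hd (by omega)
        rw [this] at hD
        have : D = δ := by rw [hD, hδdef]
        nlinarith [mul_nonneg hα0 hD0]
      have hdm1' : (d : ℝ) ≤ m - 1 := by exact_mod_cast hdm1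
      have hD1 : 1 ≤ D := by
        have : (m : ℝ) ≤ μ := Int.floor_le μ
        rw [hD]; linarith
      have h2 : Int.fract t * (1 - Int.fract t) ≤ α * D - δ := by
        have := ses_aux1 t m
        have habs : |t - m| = α * D - δ := by
          rw [hts, hδdef, abs_of_nonpos (by simp only [hδdef] at hs ⊢; linarith)]
          push_cast; linarith [hδdef]
        calc Int.fract t * (1 - Int.fract t) ≤ |t - m| := this
          _ = α * D - δ := habs
      have hDsq : ((d:ℝ) - μ) ^ 2 = D ^ 2 := by rw [hD]; ring
      rw [hDsq]
      have h3 : α * D ≤ α * D ^ 2 := by nlinarith [mul_nonneg hα0 hD0]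
      nlinarith [mul_nonneg (by linarith : (0:ℝ) ≤ 1 - α) (mul_nonneg hδ0 (by linarith : (0:ℝ) ≤ 1 - δ))]
  · -- d ≥ m + 1, D = d - μ ≥ 1 - δ
    have hdm : (m : ℝ) + 1 ≤ d := by exact_mod_cast hd
    set D : ℝ := d - μ with hD
    have hDδ : 1 - δ ≤ D := by simp only [hδdef, hD]; linarith
    have hD0 : 0 ≤ D := le_trans (by linarith) hDδ
    have hts : t = μ + α * D := by rw [ht, hD]; ring
    have hDsq : ((d:ℝ) - μ) ^ 2 = D ^ 2 := by rw [hD]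
    rcases lt_or_ge (α * D) (1 - δ) with hs | hs
    · have hfloor : ⌊t⌋ = m := by
        rw [Int.floor_eq_iff]
        constructor
        · rw [hts]; have : (m:ℝ) ≤ μ := Int.floor_le μ
          nlinarith [mul_nonneg hα0 hD0]
        · rw [hts]; simp only [hδdef] at hs; push_cast; linarith
      have hft : Int.fract t = δ + α * D := by
        rw [Int.fract, hfloor, hts, hδdef]; ring
      rw [hft, hDsq]
      have hsq : (0:ℝ) ≤ α * ((D - (1 - δ)) * (D + δ)) :=
        mul_nonneg hα0 (mul_nonneg (by linarith) (by linarith))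
      nlinarith [sq_nonneg (α * D)]
    · -- αD ≥ 1 - δ
      have h2 : Int.fract t * (1 - Int.fract t) ≤ α * D - (1 - δ) := by
        have := ses_aux1 t (m + 1)
        have habs : |t - (m + 1 : ℤ)| = α * D - (1 - δ) := by
          rw [hts, abs_of_nonneg (by simp only [hδdef] at hs ⊢; push_cast; linarith)]
          simp only [hδdef]; push_cast; ring
        linarith [this, habs.le, habs.ge]
      rw [hDsq]
      have hrhs0 : (0:ℝ) ≤ (1 - α) * (δ * (1 - δ)) :=
        mul_nonneg (by linarith) (mul_nonneg hδ0 (by linarith))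
      rcases le_or_gt 1 D with hD1 | hD1
      · have h3 : α * D ≤ α * D ^ 2 := by nlinarith [mul_nonneg hα0 hD0]
        nlinarith
      · -- D < 1 forces d = m + 1, D = 1 - δ, so α*D ≤ 1 - δ
        have hd2 : d = m + 1 := by
          by_contra hcon
          have : m + 2 ≤ d := by omega
          have : (m:ℝ) + 2 ≤ d := by exact_mod_cast this
          simp only [hδdef] at hDδ
          have : 2 - δ ≤ D := by rw [hD]; simp only [hδdef]; linarith
          linarith
        have hDeq : D = 1 - δ := by
          rw [hD, hd2, hδdef]; push_cast; ring
        have hsle : α * D ≤ D := by nlinarith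
        have : Int.fract t * (1 - Int.fract t) ≤ 0 := by rw [hDeq] at h2 hsle; linarith
        nlinarith [mul_nonneg hα0 (sq_nonneg D)]

theorem ses_feasibility_decomposition
    (μ σ2 α : ℝ) (hμ : 0 ≤ μ)
    (hfeas : σ2 ≥ (μ - ⌊μ⌋) * (1 - μ + ⌊μ⌋))
    (hα0 : 0 ≤ α) (hα1 : α ≤ 1) (d : ℕ)
    (δ μ' σ2' : ℝ) (hδ : δ = μ - ⌊μ⌋)
    (hμ' : μ' = α * d + (1 - α) * μ)
    (hσ' : σ2' = α * ((d : ℝ) - μ) ^ 2 + (1 - α) * σ2) :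
    σ2' ≥ (1 - α) * (δ * (1 - δ)) + α * ((d : ℝ) - μ) ^ 2 ∧
      α * ((d : ℝ) - μ) ^ 2 + (1 - α) * (δ * (1 - δ)) ≥
        (μ' - ⌊μ'⌋) * (1 - μ' + ⌊μ'⌋) := by
  have hδf : δ = Int.fract μ := by rw [hδ, Int.fract]
  have hδ1 : δ < 1 := by rw [hδf]; exact Int.fract_lt_one μ
  have hδ0 : 0 ≤ δ := by rw [hδf]; exact Int.fract_nonneg μ
  constructor
  · rw [hσ']
    have h := mul_le_mul_of_nonneg_left hfeas (by linarith : (0:ℝ) ≤ 1 - α)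
    have heq : (μ - ⌊μ⌋) * (1 - μ + ⌊μ⌋) = δ * (1 - δ) := by rw [hδ]; ring
    rw [heq] at h
    linarith
  · have hkey := ses_key μ α (d : ℤ) hα0 hα1
    have hcast : ((d : ℤ) : ℝ) = (d : ℝ) := by push_cast; rfl
    rw [hcast] at hkey
    have htμ : μ' = α * (d:ℝ) + (1 - α) * μ := hμ'
    have hg : (μ' - ⌊μ'⌋) * (1 - μ' + ⌊μ'⌋) = Int.fract μ' * (1 - Int.fract μ') := by
      rw [Int.fract]; ring
    rw [hg, hδf, htμ]
    calc Int.fract (α * (d:ℝ) + (1 - α) * μ) * (1 - Int.fract (α * (d:ℝ) + (1 - α) * μ))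
        ≤ α * ((d : ℝ) - μ) ^ 2 + (1 - α) * (Int.fract μ * (1 - Int.fract μ)) := hkey
      _ = α * ((d : ℝ) - μ) ^ 2 + (1 - α) * (Int.fract μ * (1 - Int.fract μ)) := rfl
end
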